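/- For m ≥ 22, the spectral radius of S^2_{(m+5)/2,2} satisfies ρ(S^2_{(m+5)/2,2}) > (1 + √(4m−7))/2. -/

import Mathlib

open scoped Classical
open SimpleGraph Matrix

def ContainsCopy {α β : Type*} (H : SimpleGraph α) (G : SimpleGraph β) : Prop :=
  ∃ f : α ↪ β, ∀ a b, H.Adj a b → G.Adj (f a) (f b)

def gem : SimpleGraph (Fin 5) :=
  SimpleGraph.fromRel (fun a b => (b.val = a.val + 1 ∧ b.val ≤ 3) ∨ b = 4)

def bookS (k : ℕ) : SimpleGraph (Fin 2 ⊕ Fin k) :=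
  SimpleGraph.fromRel (fun a _ => a.isLeft = true)

def pendantS (s t : ℕ) : SimpleGraph (Fin 2 ⊕ (Fin s ⊕ Fin t)) :=
  SimpleGraph.fromRel (fun a b =>
    match a, b with
    | Sum.inl _, Sum.inl _ => True
    | Sum.inl _, Sum.inr (Sum.inl _) => True
    | Sum.inl i, Sum.inr (Sum.inr _) => i = 0
    | _, _ => False)

def starG (r : ℕ) : SimpleGraph (Fin (r + 1)) :=
  SimpleGraph.fromRel (fun a _ => a = 0)

noncomputable def specRad {V : Type*} [Fintype V] (G : SimpleGraph V) : ℝ :=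
  sSup {μ : ℝ | Module.End.HasEigenvalue (Matrix.mulVecLin (G.adjMatrix ℝ)) μ}

noncomputable def edgeCount {V : Type*} [Fintype V] (G : SimpleGraph V) : ℕ :=
  G.edgeFinset.card

noncomputable def edgesIn {V : Type*} [Fintype V] (G : SimpleGraph V) (S : Finset V) : ℕ :=
  (G.edgeFinset.filter (fun e => ∀ v ∈ e, v ∈ S)).card

noncomputable def N0 {V : Type*} [Fintype V] (G : SimpleGraph V) (u : V) : Finset V :=
  (G.neighborFinset u).filter (fun v => ∀ w ∈ G.neighborFinset u, ¬ G.Adj v w)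

noncomputable def Nplus {V : Type*} [Fintype V] (G : SimpleGraph V) (u : V) : Finset V :=
  G.neighborFinset u \ N0 G u

noncomputable def Wset {V : Type*} [Fintype V] (G : SimpleGraph V) (u : V) : Finset V :=
  Finset.univ \ insert u (G.neighborFinset u)

def InFamily (m : ℕ) {V : Type*} [Fintype V] (G : SimpleGraph V) : Prop :=
  ¬ ContainsCopy gem G ∧ edgeCount G = m ∧ (∀ v : V, ∃ w, G.Adj v w) ∧
    ¬ Nonempty (G ≃g bookS ((m - 1) / 2))

def MaxInFamily (m : ℕ) {V : Type*} [Fintype V] (G : SimpleGraph V) : Prop :=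
  InFamily m G ∧ ∀ (n : ℕ) (H : SimpleGraph (Fin n)), InFamily m H → specRad H ≤ specRad G

def IsCutVertex {V : Type*} (G : SimpleGraph V) (v : V) : Prop :=
  ∃ a b : {x : V // x ≠ v}, G.Reachable a.1 b.1 ∧
    ¬ (G.induce {x : V | x ≠ v}).Reachable a b


private lemma rayleigh_lt_specRad {V : Type*} [Fintype V] [DecidableEq V] [Nonempty V]
    (G : SimpleGraph V) (c : ℝ) (x : V → ℝ) (hx : x ≠ 0)
    (h : c * (∑ v, x v * x v) < ∑ v, x v * ((G.adjMatrix ℝ).mulVec x v)) :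
    c < specRad G := by
  classical
  set A := G.adjMatrix ℝ with hA
  let T : EuclideanSpace ℝ V →ₗ[ℝ] EuclideanSpace ℝ V := Matrix.toEuclideanLin A
  have hTeq : T = Matrix.toEuclideanLin A := by
    ext y i
    simp only [T, Matrix.toEuclideanLin, Matrix.mulVecLin_apply, LinearEquiv.trans_apply,
      LinearEquiv.arrowCongr_apply, Matrix.toLin'_apply]
  have hT : T.IsSymmetric := by
    rw [hTeq, ← Matrix.isHermitian_iff_isSymmetric]
    show Aᴴ = A
    exact (SimpleGraph.isSymm_adjMatrix G (α := ℝ))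
  set μ : ℝ := ⨆ y : { y : EuclideanSpace ℝ V // y ≠ 0 },
    RCLike.re (inner ℝ (T y) (y : EuclideanSpace ℝ V) : ℝ) / ‖(y : EuclideanSpace ℝ V)‖ ^ 2 with hμ
  have hev : Module.End.HasEigenvalue T μ := hT.hasEigenvalue_iSup_of_finiteDimensional
  have hev' : Module.End.HasEigenvalue (Matrix.mulVecLin A) μ := by
    obtain ⟨v, hv⟩ := hev.exists_hasEigenvector
    refine Module.End.hasEigenvalue_of_hasEigenvector (x := WithLp.ofLp v) ⟨?_, ?_⟩
    · rw [Module.End.mem_eigenspace_iff]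
      have := congrArg WithLp.ofLp (Module.End.mem_eigenspace_iff.mp hv.1)
      simpa [T] using this
    · simpa using hv.2
  have hbdd : BddAbove {μ : ℝ | Module.End.HasEigenvalue (Matrix.mulVecLin A) μ} := by
    have : {μ : ℝ | Module.End.HasEigenvalue (Matrix.mulVecLin A) μ}.Finite :=
      Module.End.finite_hasEigenvalue _
    exact this.bddAbove
  have hle : μ ≤ specRad G := le_csSup hbdd hev'
  refine lt_of_lt_of_le ?_ hle
  set x' : EuclideanSpace ℝ V := (WithLp.equiv 2 (V → ℝ)).symm x with hx'def
  have hx' : x' ≠ 0 := by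
    simpa [hx'def] using hx
  have hbdd2 : BddAbove (Set.range fun y : { y : EuclideanSpace ℝ V // y ≠ 0 } =>
      RCLike.re (inner ℝ (T y) (y : EuclideanSpace ℝ V) : ℝ) / ‖(y : EuclideanSpace ℝ V)‖ ^ 2) := by
    refine ⟨‖LinearMap.toContinuousLinearMap T‖, ?_⟩
    rintro _ ⟨y, rfl⟩
    have hy0 : ‖(y : EuclideanSpace ℝ V)‖ ≠ 0 := norm_ne_zero_iff.mpr y.2
    have hy : (0:ℝ) < ‖(y : EuclideanSpace ℝ V)‖ ^ 2 := by positivity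
    rw [div_le_iff₀ hy]
    have h1 : (inner ℝ (T y) (y : EuclideanSpace ℝ V) : ℝ) ≤
        ‖T (y : EuclideanSpace ℝ V)‖ * ‖(y : EuclideanSpace ℝ V)‖ :=
      real_inner_le_norm _ _
    have h2 : ‖T (y : EuclideanSpace ℝ V)‖ ≤
        ‖LinearMap.toContinuousLinearMap T‖ * ‖(y : EuclideanSpace ℝ V)‖ := by
      have := (LinearMap.toContinuousLinearMap T).le_opNorm (y : EuclideanSpace ℝ V)
      simpa using this
    have := mul_le_mul_of_nonneg_right h2 (norm_nonneg (y : EuclideanSpace ℝ V))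
    simp only [RCLike.re_to_real]
    nlinarith [norm_nonneg (y : EuclideanSpace ℝ V)]
  have hkey : c < RCLike.re (inner ℝ (T x') (x' : EuclideanSpace ℝ V) : ℝ) /
      ‖(x' : EuclideanSpace ℝ V)‖ ^ 2 := by
    have hinner : (inner ℝ (T x') (x' : EuclideanSpace ℝ V) : ℝ) = ∑ v, x v * (A.mulVec x) v := by
      rw [PiLp.inner_apply]
      apply Finset.sum_congr rfl
      intro v _
      have h0 : (T x') v = (A *ᵥ x) v := rfl
      simp only [RCLike.inner_apply, conj_trivial] at *
      rw [h0, mul_comm]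
      exact mul_comm _ _
    have hnorm : ‖(x' : EuclideanSpace ℝ V)‖ ^ 2 = ∑ v, x v * x v := by
      rw [← real_inner_self_eq_norm_sq, PiLp.inner_apply]
      apply Finset.sum_congr rfl
      intro v _
      simp [hx'def, sq]
    have hS : (0:ℝ) < ∑ v, x v * x v := by
      rw [← hnorm]
      have : ‖(x' : EuclideanSpace ℝ V)‖ ≠ 0 := norm_ne_zero_iff.mpr hx'
      positivity
    rw [hinner, hnorm, RCLike.re_to_real, lt_div_iff₀ hS]
    exact h
  exact lt_of_lt_of_le hkey (le_ciSup hbdd2 ⟨x', hx'⟩)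

set_option maxHeartbeats 2000000
theorem stmt3 (m : ℕ) (hm : 22 ≤ m) (hodd : Odd m) :
    (1 + Real.sqrt (4 * m - 7)) / 2 < specRad (pendantS ((m - 3) / 2) 2) := by
  classical
  obtain ⟨k, hk⟩ := hodd
  set s : ℕ := (m - 3) / 2 with hsdef
  have hms : m = 2 * s + 3 := by omega
  have hmr : (m:ℝ) = 2 * (s:ℝ) + 3 := by exact_mod_cast congrArg (Nat.cast : ℕ → ℝ) hms
  have hm23 : (23:ℝ) ≤ (m:ℝ) := by exact_mod_cast (by omega : 23 ≤ m)
  have h47 : (0:ℝ) ≤ 4 * (m:ℝ) - 7 := by linarith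
  set r : ℝ := Real.sqrt (4 * (m:ℝ) - 7) with hrdef
  have hr2 : r ^ 2 = 4 * (m:ℝ) - 7 := Real.sq_sqrt h47
  have hr0 : 0 ≤ r := Real.sqrt_nonneg _
  have hr9 : 9 ≤ r := by nlinarith
  set c : ℝ := (1 + r) / 2 with hcdef
  have hc5 : (5:ℝ) ≤ c := by rw [hcdef]; linarith
  have hc2 : c ^ 2 = c + 2 * (s:ℝ) + 1 := by
    rw [hcdef]
    linear_combination (1/4) * hr2 + hmr
  have hs0 : (0:ℝ) ≤ (s:ℝ) := Nat.cast_nonneg s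
  set G := pendantS s 2 with hG
  set x : Fin 2 ⊕ (Fin s ⊕ Fin 2) → ℝ :=
    Sum.elim (fun i => if i = 0 then c*(c+(s:ℝ)+1) else c*(c+(s:ℝ)))
      (Sum.elim (fun _ => c*(c+1)) (fun _ => c+(s:ℝ)+1)) with hxdef
  have hx : x ≠ 0 := by
    intro h0
    have h1 := congrFun h0 (Sum.inr (Sum.inr 0))
    simp only [hxdef, Sum.elim_inr, Pi.zero_apply] at h1
    linarith
  have hsum1 : ∑ v, x v * x v =
      (c*(c+(s:ℝ)+1))^2 + (c*(c+(s:ℝ)))^2 + (s:ℝ) * (c*(c+1))^2 + 2 * (c+(s:ℝ)+1)^2 := by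
    simp only [Fintype.sum_sum_type, Fin.sum_univ_two]
    simp [hxdef, Finset.sum_const, Finset.card_univ]
    ring
  have hsum2 : ∑ v, x v * ((G.adjMatrix ℝ).mulVec x v) =
      c*(c+(s:ℝ)+1) * (c*(c+(s:ℝ)) + (s:ℝ)*(c*(c+1)) + 2*(c+(s:ℝ)+1))
      + c*(c+(s:ℝ)) * (c*(c+(s:ℝ)+1) + (s:ℝ)*(c*(c+1)))
      + (s:ℝ) * (c*(c+1) * (c*(c+(s:ℝ)+1) + c*(c+(s:ℝ))))
      + 2 * ((c+(s:ℝ)+1) * (c*(c+(s:ℝ)+1))) := by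
    simp only [Fintype.sum_sum_type, Fin.sum_univ_two]
    simp [hxdef, Matrix.mulVec, dotProduct, hG, pendantS, SimpleGraph.fromRel_adj,
      Fintype.sum_sum_type, Fin.sum_univ_two, Finset.sum_const, Finset.card_univ,
      Fin.isValue, mul_comm, mul_add, add_assoc]
    ring
  refine rayleigh_lt_specRad G c x hx ?_
  rw [hsum1, hsum2]
  have hz : c ^ 2 - (c + 2 * (s:ℝ) + 1) = 0 := by rw [hc2]; ring
  have key : (c*(c+(s:ℝ)+1) * (c*(c+(s:ℝ)) + (s:ℝ)*(c*(c+1)) + 2*(c+(s:ℝ)+1))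
      + c*(c+(s:ℝ)) * (c*(c+(s:ℝ)+1) + (s:ℝ)*(c*(c+1)))
      + (s:ℝ) * (c*(c+1) * (c*(c+(s:ℝ)+1) + c*(c+(s:ℝ))))
      + 2 * ((c+(s:ℝ)+1) * (c*(c+(s:ℝ)+1))))
      - c * ((c*(c+(s:ℝ)+1))^2 + (c*(c+(s:ℝ)))^2 + (s:ℝ) * (c*(c+1))^2 + 2 * (c+(s:ℝ)+1)^2)
      = c*(s:ℝ) + 2*c + 2*(s:ℝ) + 1 := by
    linear_combination (1 - c - c*(s:ℝ) - 2*c^2 - 3*c^2*(s:ℝ) - 2*c^3 - c^3*(s:ℝ)) * hz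
  have hcs : 0 ≤ c * (s:ℝ) := mul_nonneg (by linarith) hs0
  linarith
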